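/- Fix an integer γ ≥ 1 and a nonzero real number h. Let C(h) be the γ×γ matrix with entries c_{αβ}(h) = h^{2γ−α−β−1}/((2γ−α−β−1)·(γ−α−1)!·(γ−β−1)!), let L(h) be the γ×γ lower triangular matrix with entries l_{αβ}(h) = h^{β−α} · α! · (2γ−β−1)! · (γ−β−1)! · (2γ−α−β−2)! / (β! · (α−β)! · (2γ−α−1)! · (γ−α−1)! · (2γ−2β−2)!) for β ≤ α and 0 otherwise, and let D̂(h) be the γ×γ diagonal matrix with diagonal entries d̂_{αα}(h) = h^{2γ−2α−1} · (α!)² · (2γ−2α−2)! · (2γ−2α−1)! / (((γ−α−1)!)² · ((2γ−α−1)!)²). Then C(h) = L(h) · D̂(h) · L(h)ᵀ. -/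

import Mathlib

open Matrix Finset Nat

/-- The upper triangular matrix `A(h)` with entries `h^(β-α)/(β-α)!` for `α ≤ β`. -/
noncomputable def matA (γ : ℕ) (h : ℝ) : Matrix (Fin γ) (Fin γ) ℝ :=
  fun α β =>
    if (α : ℕ) ≤ (β : ℕ) then h ^ ((β : ℕ) - (α : ℕ)) / (((β : ℕ) - (α : ℕ)).factorial : ℝ)
    else 0

/-- The matrix `B(h)` with entries `h^(2γ-α-β-1)/(2γ-α-β-1)!`. -/
noncomputable def matB (γ : ℕ) (h : ℝ) : Matrix (Fin γ) (Fin γ) ℝ :=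
  fun α β =>
    h ^ (2 * γ - (α : ℕ) - (β : ℕ) - 1) / ((2 * γ - (α : ℕ) - (β : ℕ) - 1).factorial : ℝ)

/-- The matrix `C(h)` with entries `h^(2γ-α-β-1)/((2γ-α-β-1)·(γ-α-1)!·(γ-β-1)!)`. -/
noncomputable def matC (γ : ℕ) (h : ℝ) : Matrix (Fin γ) (Fin γ) ℝ :=
  fun α β =>
    h ^ (2 * γ - (α : ℕ) - (β : ℕ) - 1) /
      (((2 * γ - (α : ℕ) - (β : ℕ) - 1) * (γ - (α : ℕ) - 1).factorial *
          (γ - (β : ℕ) - 1).factorial : ℕ) : ℝ)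

/-- The diagonal matrix `D` with entries `(-1)^(γ-α-1)`. -/
noncomputable def matD (γ : ℕ) : Matrix (Fin γ) (Fin γ) ℝ :=
  Matrix.diagonal fun α : Fin γ => (-1 : ℝ) ^ (γ - (α : ℕ) - 1)

/-- The lower triangular matrix `L(h)` from the LU decomposition of `C(h)`. -/
noncomputable def matL (γ : ℕ) (h : ℝ) : Matrix (Fin γ) (Fin γ) ℝ :=
  fun α β =>
    if (β : ℕ) ≤ (α : ℕ) then
      h ^ ((β : ℤ) - (α : ℤ)) *
        (((α : ℕ).factorial * (2 * γ - (β : ℕ) - 1).factorial * (γ - (β : ℕ) - 1).factorial *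
            (2 * γ - (α : ℕ) - (β : ℕ) - 2).factorial : ℕ) : ℝ) /
        (((β : ℕ).factorial * ((α : ℕ) - (β : ℕ)).factorial * (2 * γ - (α : ℕ) - 1).factorial *
            (γ - (α : ℕ) - 1).factorial * (2 * γ - 2 * (β : ℕ) - 2).factorial : ℕ) : ℝ)
    else 0

/-- The upper triangular matrix `U(h)` from the LU decomposition of `C(h)`. -/
noncomputable def matU (γ : ℕ) (h : ℝ) : Matrix (Fin γ) (Fin γ) ℝ :=
  fun α β =>
    if (α : ℕ) ≤ (β : ℕ) then
      h ^ (2 * γ - (α : ℕ) - (β : ℕ) - 1) *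
        (((α : ℕ).factorial * (β : ℕ).factorial * (2 * γ - 2 * (α : ℕ) - 1).factorial *
            (2 * γ - (α : ℕ) - (β : ℕ) - 2).factorial : ℕ) : ℝ) /
        ((((β : ℕ) - (α : ℕ)).factorial * (2 * γ - (α : ℕ) - 1).factorial *
            (2 * γ - (β : ℕ) - 1).factorial * (γ - (α : ℕ) - 1).factorial *
            (γ - (β : ℕ) - 1).factorial : ℕ) : ℝ)
    else 0

/-- The diagonal matrix `D̂(h)` of diagonal entries of `U(h)`. -/
noncomputable def matDhat (γ : ℕ) (h : ℝ) : Matrix (Fin γ) (Fin γ) ℝ :=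
  Matrix.diagonal fun α : Fin γ =>
    h ^ (2 * γ - 2 * (α : ℕ) - 1) *
      (((α : ℕ).factorial ^ 2 * (2 * γ - 2 * (α : ℕ) - 2).factorial *
          (2 * γ - 2 * (α : ℕ) - 1).factorial : ℕ) : ℝ) /
      ((((γ - (α : ℕ) - 1).factorial) ^ 2 * ((2 * γ - (α : ℕ) - 1).factorial) ^ 2 : ℕ) : ℝ)

namespace MatCAux

/-- Numerator of the `k`-th term of the sum `(L D̂ Lᵀ)_{ab}`. -/
def Tm (γ a b k : ℕ) : ℕ :=
  a.descFactorial k * b.descFactorial k * (2*γ - 2*k - 1) *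
    (2*γ - a - k - 2).factorial * (2*γ - b - k - 2).factorial

/-- Telescoping auxiliary. -/
def Rm (γ a b k : ℕ) : ℕ :=
  a.descFactorial k * b.descFactorial k *
    (2*γ - a - k - 1).factorial * (2*γ - b - k - 1).factorial

lemma key (γ a b k : ℕ) (ha : a < γ) (hb : b < γ) :
    Rm γ a b k = Rm γ a b (k+1) + (2*γ - a - b - 1) * Tm γ a b k := by
  rcases lt_or_ge a k with hka | hka
  · unfold Rm Tm
    rw [Nat.descFactorial_of_lt hka, Nat.descFactorial_of_lt (show a < k+1 by omega)]
    ring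
  rcases lt_or_ge b k with hkb | hkb
  · unfold Rm Tm
    rw [Nat.descFactorial_of_lt hkb, Nat.descFactorial_of_lt (show b < k+1 by omega)]
    ring
  obtain ⟨x, rfl⟩ : ∃ x, a = k + x := ⟨a - k, by omega⟩
  obtain ⟨y, rfl⟩ : ∃ y, b = k + y := ⟨b - k, by omega⟩
  obtain ⟨p, rfl⟩ : ∃ p, γ = k + x + 1 + p := ⟨γ - (k + x) - 1, by omega⟩
  obtain ⟨z, hz⟩ : ∃ z, y + z = x + p := ⟨x + p - y, by omega⟩
  unfold Rm Tm
  rw [Nat.descFactorial_succ, Nat.descFactorial_succ]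
  rw [show 2*(k+x+1+p) - (k+x) - k - 1 = (x+2*p) + 1 by omega,
      show 2*(k+x+1+p) - (k+y) - k - 1 = (x+p+z) + 1 by omega,
      show 2*(k+x+1+p) - (k+x) - (k+1) - 1 = x+2*p by omega,
      show 2*(k+x+1+p) - (k+y) - (k+1) - 1 = x+p+z by omega,
      show 2*(k+x+1+p) - (k+x) - (k+y) - 1 = p+z+1 by omega,
      show 2*(k+x+1+p) - 2*k - 1 = 2*x+2*p+1 by omega,
      show 2*(k+x+1+p) - (k+x) - k - 2 = x+2*p by omega,
      show 2*(k+x+1+p) - (k+y) - k - 2 = x+p+z by omega,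
      show k + x - k = x by omega, show k + y - k = y by omega,
      Nat.factorial_succ (x+2*p), Nat.factorial_succ (x+p+z)]
  zify at hz ⊢
  linear_combination (-((((k+x).descFactorial k : ℤ)) * ((k+y).descFactorial k) *
    ((x+2*p).factorial) * ((x+p+z).factorial) * x)) * hz

lemma telescope (γ a b : ℕ) (ha : a < γ) (hb : b < γ) :
    ∀ m, Rm γ a b m + (2*γ - a - b - 1) * ∑ k ∈ Finset.range m, Tm γ a b k = Rm γ a b 0 := by
  intro m
  induction m with
  | zero => simp
  | succ m ih =>
    have hk := key γ a b m ha hb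
    calc Rm γ a b (m+1) + (2*γ - a - b - 1) * ∑ k ∈ Finset.range (m+1), Tm γ a b k
        = (Rm γ a b (m+1) + (2*γ - a - b - 1) * Tm γ a b m) +
            (2*γ - a - b - 1) * ∑ k ∈ Finset.range m, Tm γ a b k := by
          rw [Finset.sum_range_succ]; ring
      _ = Rm γ a b m + (2*γ - a - b - 1) * ∑ k ∈ Finset.range m, Tm γ a b k := by rw [← hk]
      _ = Rm γ a b 0 := ih

lemma sum_Tm (γ a b : ℕ) (ha : a < γ) (hb : b < γ) :
    (2*γ - a - b - 1) * ∑ k ∈ Finset.range γ, Tm γ a b k =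
      (2*γ - a - 1).factorial * (2*γ - b - 1).factorial := by
  have := telescope γ a b ha hb γ
  rw [show Rm γ a b γ = 0 by unfold Rm; rw [Nat.descFactorial_of_lt ha]; ring] at this
  rw [Nat.zero_add] at this
  rw [this]
  unfold Rm
  simp


lemma term_eq (γ a b k : ℕ) (ha : a < γ) (hb : b < γ) (hka : k ≤ a) (hkb : k ≤ b)
    (h : ℝ) (hh : h ≠ 0) :
    (h ^ ((k:ℤ) - (a:ℤ)) *
        ((a.factorial * (2*γ - k - 1).factorial * (γ - k - 1).factorial *
            (2*γ - a - k - 2).factorial : ℕ) : ℝ) /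
        ((k.factorial * (a - k).factorial * (2*γ - a - 1).factorial *
            (γ - a - 1).factorial * (2*γ - 2*k - 2).factorial : ℕ) : ℝ)) *
      (h ^ (2*γ - 2*k - 1) *
        ((k.factorial ^ 2 * (2*γ - 2*k - 2).factorial * (2*γ - 2*k - 1).factorial : ℕ) : ℝ) /
        (((γ - k - 1).factorial ^ 2 * (2*γ - k - 1).factorial ^ 2 : ℕ) : ℝ)) *
      (h ^ ((k:ℤ) - (b:ℤ)) *
        ((b.factorial * (2*γ - k - 1).factorial * (γ - k - 1).factorial *
            (2*γ - b - k - 2).factorial : ℕ) : ℝ) /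
        ((k.factorial * (b - k).factorial * (2*γ - b - 1).factorial *
            (γ - b - 1).factorial * (2*γ - 2*k - 2).factorial : ℕ) : ℝ)) =
    h ^ (2*γ - a - b - 1) * ((Tm γ a b k : ℕ) : ℝ) /
      (((2*γ - a - 1).factorial * (γ - a - 1).factorial * (2*γ - b - 1).factorial *
          (γ - b - 1).factorial : ℕ) : ℝ) := by
  obtain ⟨x, rfl⟩ : ∃ x, a = k + x := ⟨a - k, by omega⟩
  obtain ⟨y, rfl⟩ : ∃ y, b = k + y := ⟨b - k, by omega⟩
  obtain ⟨p, rfl⟩ : ∃ p, γ = k + x + 1 + p := ⟨γ - (k + x) - 1, by omega⟩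
  obtain ⟨z, hz⟩ : ∃ z, y + z = x + p := ⟨x + p - y, by omega⟩
  unfold Tm
  rw [show 2*(k+x+1+p) - (k+x) - k - 2 = x+2*p by omega,
      show 2*(k+x+1+p) - (k+y) - k - 2 = x+p+z by omega,
      show 2*(k+x+1+p) - k - 1 = k+2*x+2*p+1 by omega,
      show (k+x+1+p) - k - 1 = x+p by omega,
      show 2*(k+x+1+p) - (k+x) - 1 = k+x+2*p+1 by omega,
      show (k+x+1+p) - (k+x) - 1 = p by omega,
      show 2*(k+x+1+p) - (k+y) - 1 = k+x+p+z+1 by omega,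
      show (k+x+1+p) - (k+y) - 1 = z by omega,
      show 2*(k+x+1+p) - 2*k - 2 = 2*x+2*p by omega,
      show 2*(k+x+1+p) - 2*k - 1 = 2*x+2*p+1 by omega,
      show 2*(k+x+1+p) - (k+x) - (k+y) - 1 = p+z+1 by omega,
      show k + x - k = x by omega, show k + y - k = y by omega]
  rw [show ((k:ℤ) - ((k+x : ℕ):ℤ)) = -(x:ℤ) by push_cast; ring,
      show ((k:ℤ) - ((k+y : ℕ):ℤ)) = -(y:ℤ) by push_cast; ring,
      _root_.zpow_neg, _root_.zpow_neg, zpow_natCast, zpow_natCast]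
  have hfa : (k+x).factorial = x.factorial * (k+x).descFactorial k := by
    rw [← Nat.factorial_mul_descFactorial (show k ≤ k + x by omega),
      show k + x - k = x by omega]
  have hfb : (k+y).factorial = y.factorial * (k+y).descFactorial k := by
    rw [← Nat.factorial_mul_descFactorial (show k ≤ k + y by omega),
      show k + y - k = y by omega]
  rw [hfa, hfb, Nat.factorial_succ (2*x+2*p),
      show 2*x+2*p+1 = x + y + (p+z+1) by omega]
  have h1 : (x.factorial : ℝ) ≠ 0 := by positivity
  push_cast
  field_simp
  ring

end MatCAux

open MatCAux in
theorem matC_eq_matL_matDhat_matL_transpose (γ : ℕ) (hγ : 1 ≤ γ) (h : ℝ) (hh : h ≠ 0) :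
    matC γ h = matL γ h * matDhat γ h * (matL γ h)ᵀ := by
  ext i j
  have ha : (i : ℕ) < γ := i.isLt
  have hb : (j : ℕ) < γ := j.isLt
  have hrhs : (matL γ h * matDhat γ h * (matL γ h)ᵀ) i j =
      ∑ k ∈ Finset.range γ, h ^ (2*γ - (i:ℕ) - (j:ℕ) - 1) * ((Tm γ i j k : ℕ) : ℝ) /
        (((2*γ - (i:ℕ) - 1).factorial * (γ - (i:ℕ) - 1).factorial *
          (2*γ - (j:ℕ) - 1).factorial * (γ - (j:ℕ) - 1).factorial : ℕ) : ℝ) := by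
    rw [Matrix.mul_apply, ← Fin.sum_univ_eq_sum_range]
    refine Finset.sum_congr rfl fun k _ => ?_
    rw [matDhat, Matrix.mul_diagonal, Matrix.transpose_apply]
    by_cases hka : (k : ℕ) ≤ (i : ℕ)
    · by_cases hkb : (k : ℕ) ≤ (j : ℕ)
      · simp only [matL, if_pos hka, if_pos hkb]
        exact term_eq γ i j k ha hb hka hkb h hh
      · simp only [matL, if_neg hkb]
        rw [show (Tm γ (i:ℕ) (j:ℕ) (k:ℕ)) = 0 by
          unfold Tm; rw [Nat.descFactorial_of_lt (show (j:ℕ) < (k:ℕ) by omega)]; ring]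
        simp
    · simp only [matL, if_neg hka]
      rw [show (Tm γ (i:ℕ) (j:ℕ) (k:ℕ)) = 0 by
        unfold Tm; rw [Nat.descFactorial_of_lt (by omega)]; ring]
      simp
  rw [hrhs]
  rw [← Finset.sum_div, ← Finset.mul_sum, ← Nat.cast_sum]
  rw [matC]
  have hsum := sum_Tm γ i j ha hb
  have hc : (1:ℕ) ≤ 2*γ - (i:ℕ) - (j:ℕ) - 1 := by omega
  have hcr : ((2*γ - (i:ℕ) - (j:ℕ) - 1 : ℕ) : ℝ) ≠ 0 := Nat.cast_ne_zero.mpr (by omega)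
  have hsr : ((2*γ - (i:ℕ) - (j:ℕ) - 1 : ℕ) : ℝ) * ((∑ k ∈ Finset.range γ, Tm γ i j k : ℕ) : ℝ)
      = (((2*γ - (i:ℕ) - 1).factorial * (2*γ - (j:ℕ) - 1).factorial : ℕ) : ℝ) := by
    exact_mod_cast congrArg (Nat.cast : ℕ → ℝ) hsum
  have hf1 : (((γ - (i:ℕ) - 1).factorial : ℕ) : ℝ) ≠ 0 := Nat.cast_ne_zero.mpr (Nat.factorial_ne_zero _)
  have hf2 : (((γ - (j:ℕ) - 1).factorial : ℕ) : ℝ) ≠ 0 := Nat.cast_ne_zero.mpr (Nat.factorial_ne_zero _)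
  have hf3 : (((2*γ - (i:ℕ) - 1).factorial : ℕ) : ℝ) ≠ 0 := Nat.cast_ne_zero.mpr (Nat.factorial_ne_zero _)
  have hf4 : (((2*γ - (j:ℕ) - 1).factorial : ℕ) : ℝ) ≠ 0 := Nat.cast_ne_zero.mpr (Nat.factorial_ne_zero _)
  push_cast
  push_cast at hsr
  field_simp
  linear_combination (-1 : ℝ) * hsr
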